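/- For all a ≠ b in I and all (ν,J) ∈ RC(∞): f_a^* f_b(ν,J) = f_b f_a^*(ν,J), tε_a^*(f_b(ν,J)) = tε_a^*(ν,J), and tε_b(f_a^*(ν,J)) = tε_b(ν,J). -/

import Mathlib

/-! Rigged configurations for generalized Kac–Moody (Borcherds) algebras. -/

/-- A Borcherds–Cartan matrix: integer matrix with `A a a = 2` or `A a a` nonpositive even,
nonpositive off-diagonal entries, and `A a b = 0 ↔ A b a = 0`. -/
structure IsBorcherdsCartan {I : Type*} (A : I → I → ℤ) : Prop where
  diag : ∀ a, A a a = 2 ∨ (A a a ≤ 0 ∧ Even (A a a))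
  offdiag : ∀ a b, a ≠ b → A a b ≤ 0
  zero_iff : ∀ a b, A a b = 0 ↔ A b a = 0

/-- A (raw) rigged configuration: for each color `a ∈ I`, a multiset of pairs
`(row length, rigging)`.  Rows of length `0` with rigging `0` are treated implicitly by the
operators below. -/
abbrev RCraw (I : Type*) := I → Multiset (ℕ × ℤ)

variable {I : Type*} [DecidableEq I]

/-- The empty rigged configuration `(ν_∅, J_∅)`. -/
def emptyRC : RCraw I := fun _ => 0

/-- `|ν^(b)|`, the number of boxes of color `b`. -/
def rcSize (ν : RCraw I) (b : I) : ℤ := ((ν b).map fun p => (p.1 : ℤ)).sum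

/-- The vacancy number `p_i^(a) = -∑_b A a b ∑_{rows j of ν^(b)} min i j`. -/
noncomputable def vac (A : I → I → ℤ) (ν : RCraw I) (a : I) (i : ℕ) : ℤ :=
  -∑ᶠ b, A a b * ((ν b).map fun p => (min i p.1 : ℤ)).sum

/-- The limiting vacancy number `p_∞^(a) = -∑_b A a b |ν^(b)| = ⟨h_a, wt(ν,J)⟩`. -/
noncomputable def pInf (A : I → I → ℤ) (ν : RCraw I) (a : I) : ℤ :=
  -∑ᶠ b, A a b * rcSize ν b

/-- Minimum of a multiset of integers together with `0` (the rigging of the implicit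
length-`0` rows). -/
def minWith0 (s : Multiset ℤ) : ℤ := s.fold min 0

/-- Minimum of a nonempty multiset of integers (junk value `0` on the empty multiset). -/
def minPosRows (s : Multiset ℤ) : ℤ := s.fold min (s.fold max 0)

/-- Maximum of a multiset of naturals together with `0`. -/
def maxWith0 (s : Multiset ℕ) : ℕ := s.fold max 0

/-- Minimum of a nonempty multiset of naturals (junk value on the empty multiset). -/
def minPosRowsN (s : Multiset ℕ) : ℕ := s.fold min (s.fold max 0)

/-- The crystal operator `f_a` on rigged configurations: add a box to a row of maximal
length among the rows of `ν^(a)` whose rigging equals the smallest rigging `x` (with the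
length-`0` rows of rigging `0` included), give the new row the rigging `x - A a a / 2`, and
change all other riggings so that the coriggings are preserved. -/
def fOp (A : I → I → ℤ) (a : I) (ν : RCraw I) : RCraw I :=
  let M := ν a
  let x := minWith0 (M.map Prod.snd)
  let ℓ := maxWith0 ((M.filter fun p => p.2 = x).map Prod.fst)
  fun b =>
    let adj : Multiset (ℕ × ℤ) → Multiset (ℕ × ℤ) :=
      Multiset.map fun p => (p.1, p.2 - if ℓ < p.1 then A b a else 0)
    if b = a then adj (M.erase (ℓ, x)) + {(ℓ + 1, x - A a a / 2)} else adj (ν b)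

/-- Auxiliary for `eOp`: remove a box from a row of minimal (positive) length among the
rows of `ν^(a)` with rigging `x`, give it the rigging `x + A a a / 2` (dropping the row if
its length becomes `0`), and change all other riggings so that the coriggings are
preserved. -/
def eRemove (A : I → I → ℤ) (a : I) (ν : RCraw I) (x : ℤ) : RCraw I :=
  let M := ν a
  let ℓ := minPosRowsN ((M.filter fun p => p.2 = x).map Prod.fst)
  fun b =>
    let adj : Multiset (ℕ × ℤ) → Multiset (ℕ × ℤ) :=
      Multiset.map fun p => (p.1, p.2 + if ℓ ≤ p.1 then A b a else 0)
    if b = a then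
      adj (M.erase (ℓ, x)) + (if ℓ = 1 then 0 else {(ℓ - 1, x + A a a / 2)})
    else adj (ν b)

/-- The crystal operator `e_a` on rigged configurations. -/
def eOp (A : I → I → ℤ) (a : I) (ν : RCraw I) : Option (RCraw I) :=
  if A a a = 2 then
    let x := minWith0 ((ν a).map Prod.snd)
    if x = 0 then none else some (eRemove A a ν x)
  else
    if ν a = 0 ∨ minPosRows ((ν a).map Prod.snd) ≠ -A a a / 2 then none
    else some (eRemove A a ν (-A a a / 2))

/-- The multiset of coriggings `p_i^(a) - x` of the (positive length) rows of `ν^(a)`. -/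
noncomputable def corigs (A : I → I → ℤ) (ν : RCraw I) (a : I) : Multiset ℤ :=
  (ν a).map fun p => vac A ν a p.1 - p.2

open scoped Classical in
/-- The star crystal operator `f_a^*`: add a box to a row of maximal length among the rows
of `ν^(a)` whose corigging equals the smallest corigging `x` (with the length-`0` rows of
corigging `0` included), set the rigging of the new row so that its corigging is
`x - A a a / 2`, and keep all other riggings fixed. -/
noncomputable def fStar (A : I → I → ℤ) (a : I) (ν : RCraw I) : RCraw I :=
  let M := ν a
  let x := minWith0 (corigs A ν a)
  let ℓ := maxWith0 ((M.filter fun p => vac A ν a p.1 - p.2 = x).map Prod.fst)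
  fun b =>
    if b = a then
      M.erase (ℓ, vac A ν a ℓ - x) + {(ℓ + 1, (vac A ν a (ℓ + 1) - A a a) - (x - A a a / 2))}
    else ν b

open scoped Classical in
/-- Auxiliary for `eStarOp`: remove a box from a row of minimal (positive) length among
the rows of `ν^(a)` with corigging `x`, set its rigging so that its corigging is
`x - A a a / 2` (dropping the row if its length becomes `0`), and keep all other riggings
fixed. -/
noncomputable def eStarRemove (A : I → I → ℤ) (a : I) (ν : RCraw I) (x : ℤ) : RCraw I :=
  let M := ν a
  let ℓ := minPosRowsN ((M.filter fun p => vac A ν a p.1 - p.2 = x).map Prod.fst)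
  fun b =>
    if b = a then
      M.erase (ℓ, vac A ν a ℓ - x) +
        (if ℓ = 1 then 0 else {(ℓ - 1, vac A ν a (ℓ - 1) - (x - A a a / 2))})
    else ν b

/-- The star crystal operator `e_a^*`. -/
noncomputable def eStarOp (A : I → I → ℤ) (a : I) (ν : RCraw I) : Option (RCraw I) :=
  if A a a = 2 then
    let x := minWith0 (corigs A ν a)
    if x = 0 then none else some (eStarRemove A a ν x)
  else
    if ν a = 0 ∨ minPosRows (corigs A ν a) ≠ -A a a / 2 then none
    else some (eStarRemove A a ν (-A a a / 2))

/-- `RC(∞)`: the set of rigged configurations generated from the empty rigged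
configuration by the operators `e_a`, `f_a`. -/
inductive RCinf (A : I → I → ℤ) : RCraw I → Prop
  | empty : RCinf A emptyRC
  | fstep (a : I) (ν : RCraw I) : RCinf A ν → RCinf A (fOp A a ν)
  | estep (a : I) (ν ν' : RCraw I) : RCinf A ν → eOp A a ν = some ν' → RCinf A ν'

/-- `RC(∞)^*`: the set of rigged configurations generated from the empty rigged
configuration by the operators `e_a^*`, `f_a^*`. -/
inductive RCinfStar (A : I → I → ℤ) : RCraw I → Prop
  | empty : RCinfStar A emptyRC
  | fstep (a : I) (ν : RCraw I) : RCinfStar A ν → RCinfStar A (fStar A a ν)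
  | estep (a : I) (ν ν' : RCraw I) : RCinfStar A ν → eStarOp A a ν = some ν' → RCinfStar A ν'

/-- Iteration of a partial map. -/
def iterOpt {α : Type*} (g : α → Option α) : ℕ → α → Option α
  | 0, v => some v
  | k + 1, v => (iterOpt g k v).bind g

/-- `tε_a(ν,J) = max {k | e_a^k (ν,J) ≠ 0}`. -/
noncomputable def teRC (A : I → I → ℤ) (a : I) (ν : RCraw I) : ℕ :=
  sSup {k | iterOpt (eOp A a) k ν ≠ none}

/-- `tε_a^*(ν,J) = max {k | (e_a^*)^k (ν,J) ≠ 0}`. -/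
noncomputable def teStarRC (A : I → I → ℤ) (a : I) (ν : RCraw I) : ℕ :=
  sSup {k | iterOpt (eStarOp A a) k ν ≠ none}

/-- `ε_a`: for real `a` the maximal number of applications of `e_a`, for imaginary `a`
zero. -/
noncomputable def epsRC (A : I → I → ℤ) (a : I) (ν : RCraw I) : ℤ :=
  if A a a = 2 then (teRC A a ν : ℤ) else 0

/-- `φ_a(ν,J) = ⟨h_a, wt(ν,J)⟩ + ε_a(ν,J)`. -/
noncomputable def phiRC (A : I → I → ℤ) (a : I) (ν : RCraw I) : ℤ :=
  pInf A ν a + epsRC A a ν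

/-- `ε_a^*`: for real `a` the maximal number of applications of `e_a^*`, for imaginary `a`
zero. -/
noncomputable def epsStarRC (A : I → I → ℤ) (a : I) (ν : RCraw I) : ℤ :=
  if A a a = 2 then (teStarRC A a ν : ℤ) else 0

/-- `φ_a^*(ν,J) = ⟨h_a, wt(ν,J)⟩ + ε_a^*(ν,J)`. -/
noncomputable def phiStarRC (A : I → I → ℤ) (a : I) (ν : RCraw I) : ℤ :=
  pInf A ν a + epsStarRC A a ν

/-- The weight of a rigged configuration, as the coefficient function of
`-∑_a |ν^(a)| α_a`. -/
def wtRC (ν : RCraw I) : I → ℤ := fun b => -rcSize ν b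

/-- For imaginary `a`, `κ_a(ν,J) = tε_a^*(ν,J)·A a a + ⟨h_a, wt(ν,J)⟩`. -/
noncomputable def kappaRC (A : I → I → ℤ) (a : I) (ν : RCraw I) : ℤ :=
  (teStarRC A a ν : ℤ) * A a a + pInf A ν a

/-- For imaginary `a`, `κ_a^*(ν,J) = tε_a(ν,J)·A a a + ⟨h_a, wt(ν,J)⟩`. -/
noncomputable def kappaStarRC (A : I → I → ℤ) (a : I) (ν : RCraw I) : ℤ :=
  (teRC A a ν : ℤ) * A a a + pInf A ν a

namespace RCAux

lemma fold_min_le {α : Type*} [LinearOrder α] (b : α) (s : Multiset α) :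
    ∀ {x : α}, x ∈ s → s.fold min b ≤ x := by
  induction s using Multiset.induction_on with
  | empty => intro x hx; simp at hx
  | cons a t ih =>
    intro x hx
    rw [Multiset.fold_cons_left]
    rcases Multiset.mem_cons.1 hx with h | h
    · exact h ▸ min_le_left _ _
    · exact (min_le_right _ _).trans (ih h)

lemma le_fold_max {α : Type*} [LinearOrder α] (b : α) (s : Multiset α) :
    ∀ {x : α}, x ∈ s → x ≤ s.fold max b := by
  induction s using Multiset.induction_on with
  | empty => intro x hx; simp at hx
  | cons a t ih =>
    intro x hx
    rw [Multiset.fold_cons_left]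
    rcases Multiset.mem_cons.1 hx with h | h
    · exact h ▸ le_max_left _ _
    · exact (ih h).trans (le_max_right _ _)

lemma fold_min_le_base {α : Type*} [LinearOrder α] (b : α) (s : Multiset α) :
    s.fold min b ≤ b := by
  induction s using Multiset.induction_on with
  | empty => simp
  | cons a t ih => rw [Multiset.fold_cons_left]; exact (min_le_right _ _).trans ih

lemma base_le_fold_max {α : Type*} [LinearOrder α] (b : α) (s : Multiset α) :
    b ≤ s.fold max b := by
  induction s using Multiset.induction_on with
  | empty => simp
  | cons a t ih => rw [Multiset.fold_cons_left]; exact ih.trans (le_max_right _ _)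

lemma fold_min_mem_or_eq {α : Type*} [LinearOrder α] (b : α) (s : Multiset α) :
    s.fold min b ∈ s ∨ s.fold min b = b := by
  induction s using Multiset.induction_on with
  | empty => right; simp
  | cons a t ih =>
    rw [Multiset.fold_cons_left]
    rcases min_cases a (t.fold min b) with ⟨h, _⟩ | ⟨h, _⟩
    · left; rw [h]; exact Multiset.mem_cons_self _ _
    · rw [h]
      rcases ih with h' | h'
      · left; exact Multiset.mem_cons_of_mem h'
      · right; exact h'

lemma fold_max_mem_or_eq {α : Type*} [LinearOrder α] (b : α) (s : Multiset α) :
    s.fold max b ∈ s ∨ s.fold max b = b := by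
  induction s using Multiset.induction_on with
  | empty => right; simp
  | cons a t ih =>
    rw [Multiset.fold_cons_left]
    rcases max_cases a (t.fold max b) with ⟨h, _⟩ | ⟨h, _⟩
    · left; rw [h]; exact Multiset.mem_cons_self _ _
    · rw [h]
      rcases ih with h' | h'
      · left; exact Multiset.mem_cons_of_mem h'
      · right; exact h'

lemma fold_minmax_mem {α : Type*} [LinearOrder α] (z : α) (s : Multiset α) (h : s ≠ 0) :
    s.fold min (s.fold max z) ∈ s := by
  rcases fold_min_mem_or_eq (s.fold max z) s with h1 | h1
  · exact h1
  · rcases fold_max_mem_or_eq z s with h2 | h2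
    · rwa [h1]
    · obtain ⟨x, hx⟩ := Multiset.exists_mem_of_ne_zero h
      have hle : s.fold min (s.fold max z) ≤ x := fold_min_le _ _ hx
      have hge : x ≤ s.fold max z := le_fold_max _ _ hx
      have : s.fold min (s.fold max z) = x := le_antisymm hle (by rw [h1]; exact hge)
      exact this ▸ hx

end RCAux

set_option linter.unusedSectionVars false
namespace RCAux

variable {I : Type*} [DecidableEq I]

lemma minWith0_mem {s : Multiset ℤ} (h : minWith0 s ≠ 0) : minWith0 s ∈ s := by
  rcases fold_min_mem_or_eq 0 s with h1 | h1
  · exact h1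
  · exact absurd h1 h

lemma maxWith0_mem {s : Multiset ℕ} (h : maxWith0 s ≠ 0) : maxWith0 s ∈ s := by
  rcases fold_max_mem_or_eq 0 s with h1 | h1
  · exact h1
  · exact absurd h1 h

lemma minPosRows_mem {s : Multiset ℤ} (h : s ≠ 0) : minPosRows s ∈ s :=
  fold_minmax_mem 0 s h

lemma minPosRowsN_mem {s : Multiset ℕ} (h : s ≠ 0) : minPosRowsN s ∈ s :=
  fold_minmax_mem 0 s h

/-- Rigging-shift map. -/
def shRow (g : ℕ → ℤ) : ℕ × ℤ → ℕ × ℤ := fun p => (p.1, p.2 + g p.1)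

lemma shRow_inj (g : ℕ → ℤ) : Function.Injective (shRow g) := by
  rintro ⟨i, x⟩ ⟨j, y⟩ h
  simp only [shRow, Prod.mk.injEq] at h
  obtain ⟨h1, h2⟩ := h
  subst h1
  simp only [Prod.mk.injEq, true_and]
  omega

lemma map_shRow_erase (g : ℕ → ℤ) (s : Multiset (ℕ × ℤ)) (p : ℕ × ℤ) :
    (s.erase p).map (shRow g) = (s.map (shRow g)).erase (shRow g p) :=
  Multiset.map_erase _ (shRow_inj g) _ _

lemma map_fst_shRow (g : ℕ → ℤ) (s : Multiset (ℕ × ℤ)) :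
    (s.map (shRow g)).map Prod.fst = s.map Prod.fst := by
  rw [Multiset.map_map]; rfl

lemma map_shRow_eq_zero {g : ℕ → ℤ} {s : Multiset (ℕ × ℤ)} :
    s.map (shRow g) = 0 ↔ s = 0 := by simp

/-- Sum of `min i (row length)` over the rows. -/
def rowSum (s : Multiset (ℕ × ℤ)) (i : ℕ) : ℤ := (s.map fun p => (min i p.1 : ℤ)).sum

lemma rowSum_shRow (g : ℕ → ℤ) (s : Multiset (ℕ × ℤ)) (i : ℕ) :
    rowSum (s.map (shRow g)) i = rowSum s i := by
  rw [rowSum, Multiset.map_map]; rfl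

lemma rowSum_add (s t : Multiset (ℕ × ℤ)) (i : ℕ) :
    rowSum (s + t) i = rowSum s i + rowSum t i := by simp [rowSum]

lemma rowSum_singleton (p : ℕ × ℤ) (i : ℕ) :
    rowSum {p} i = min (i : ℤ) (p.1 : ℤ) := by simp [rowSum]

lemma rowSum_zero (i : ℕ) : rowSum 0 i = 0 := rfl

lemma rowSum_erase {s : Multiset (ℕ × ℤ)} {p : ℕ × ℤ} (h : p ∈ s) (i : ℕ) :
    rowSum (s.erase p) i = rowSum s i - min (i : ℤ) (p.1 : ℤ) := by
  have key : rowSum s i = min (i : ℤ) (p.1 : ℤ) + rowSum (s.erase p) i := by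
    conv_lhs => rw [← Multiset.cons_erase h]
    simp [rowSum]
  rw [key]; ring

lemma vac_rowSum (A : I → I → ℤ) (ν : RCraw I) (a : I) (i : ℕ) :
    vac A ν a i = -∑ᶠ c, A a c * rowSum (ν c) i := rfl

/-- Finite support. -/
def FinS (ν : RCraw I) : Prop := (Function.support ν).Finite

lemma vac_shift (A : I → I → ℤ) {ν ν' : RCraw I} (hfin : FinS ν) {b : I} {i : ℕ} (δ : ℤ)
    (hb : rowSum (ν' b) i = rowSum (ν b) i + δ)
    (hc : ∀ c, c ≠ b → rowSum (ν' c) i = rowSum (ν c) i) (a : I) :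
    vac A ν' a i = vac A ν a i - A a b * δ := by
  rw [vac_rowSum, vac_rowSum]
  have key : ∀ c, A a c * rowSum (ν' c) i
      = A a c * rowSum (ν c) i + (if c = b then A a b * δ else 0) := by
    intro c
    by_cases h : c = b
    · subst h; rw [hb, mul_add, if_pos rfl]
    · rw [hc c h, if_neg h, add_zero]
  have hs1 : (Function.support fun c => A a c * rowSum (ν c) i).Finite := by
    refine hfin.subset fun c hc' => ?_
    simp only [Function.mem_support] at hc' ⊢
    intro h0
    rw [h0, rowSum_zero, mul_zero] at hc'
    exact hc' rfl
  have hs2 : (Function.support fun c => if c = b then A a b * δ else 0).Finite := by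
    refine (Set.finite_singleton b).subset fun c hc' => ?_
    simp only [Function.mem_support] at hc'
    by_contra h0
    simp only [Set.mem_singleton_iff] at h0
    rw [if_neg h0] at hc'
    exact hc' rfl
  rw [finsum_congr key, finsum_add_distrib hs1 hs2,
    finsum_eq_single _ b (fun x hx => if_neg hx), if_pos rfl]
  ring

end RCAux

namespace RCAux

variable {I : Type*} [DecidableEq I]

/-- The rigging selected by `fOp`. -/
def fx (ν : RCraw I) (b : I) : ℤ := minWith0 ((ν b).map Prod.snd)

/-- The row length selected by `fOp`. -/
def fL (ν : RCraw I) (b : I) : ℕ :=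
  maxWith0 (((ν b).filter fun p => p.2 = fx ν b).map Prod.fst)

lemma fOp_apply_ne (A : I → I → ℤ) (b : I) (ν : RCraw I) {c : I} (h : c ≠ b) :
    fOp A b ν c = (ν c).map (shRow fun i => -(if fL ν b < i then A c b else 0)) := by
  rw [fL, fx]
  simp only [fOp, if_neg h]
  exact Multiset.map_congr rfl fun p _ => by simp [shRow, sub_eq_add_neg]

lemma fOp_apply_self (A : I → I → ℤ) (b : I) (ν : RCraw I) :
    fOp A b ν b = ((ν b).erase (fL ν b, fx ν b)).map
        (shRow fun i => -(if fL ν b < i then A b b else 0))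
      + {(fL ν b + 1, fx ν b - A b b / 2)} := by
  rw [fL, fx]
  simp only [fOp, if_pos rfl]
  refine congrArg₂ (· + ·) ?_ rfl
  exact Multiset.map_congr rfl fun p _ => by simp [shRow, sub_eq_add_neg]

/-- The row length selected by `eRemove`. -/
def eL (ν : RCraw I) (b : I) (x : ℤ) : ℕ :=
  minPosRowsN (((ν b).filter fun p => p.2 = x).map Prod.fst)

lemma eRemove_apply_ne (A : I → I → ℤ) (b : I) (ν : RCraw I) (x : ℤ) {c : I} (h : c ≠ b) :
    eRemove A b ν x c = (ν c).map (shRow fun i => if eL ν b x ≤ i then A c b else 0) := by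
  rw [eL]
  simp only [eRemove, if_neg h]
  exact Multiset.map_congr rfl fun p _ => by simp [shRow]

lemma eRemove_apply_self (A : I → I → ℤ) (b : I) (ν : RCraw I) (x : ℤ) :
    eRemove A b ν x b = ((ν b).erase (eL ν b x, x)).map
        (shRow fun i => if eL ν b x ≤ i then A b b else 0)
      + (if eL ν b x = 1 then 0 else {(eL ν b x - 1, x + A b b / 2)}) := by
  rw [eL]
  simp only [eRemove, if_pos rfl]
  refine congrArg₂ (· + ·) ?_ rfl
  exact Multiset.map_congr rfl fun p _ => by simp [shRow]

/-- The corigging selected by `fStar`. -/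
noncomputable def sx (A : I → I → ℤ) (ν : RCraw I) (a : I) : ℤ := minWith0 (corigs A ν a)

/-- The row length selected by `fStar`. -/
noncomputable def sL (A : I → I → ℤ) (ν : RCraw I) (a : I) : ℕ :=
  maxWith0 (((ν a).filter fun p => vac A ν a p.1 - p.2 = minWith0 (corigs A ν a)).map Prod.fst)

lemma fStar_apply_ne (A : I → I → ℤ) (a : I) (ν : RCraw I) {c : I} (h : c ≠ a) :
    fStar A a ν c = ν c := by
  simp only [fStar, if_neg h]

lemma fStar_apply_self (A : I → I → ℤ) (a : I) (ν : RCraw I) :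
    fStar A a ν a = (ν a).erase (sL A ν a, vac A ν a (sL A ν a) - sx A ν a)
      + {(sL A ν a + 1, (vac A ν a (sL A ν a + 1) - A a a) - (sx A ν a - A a a / 2))} := by
  rw [sL, sx]
  simp only [fStar, if_pos rfl]

/-- The row length selected by `eStarRemove`. -/
noncomputable def seL (A : I → I → ℤ) (ν : RCraw I) (a : I) (x : ℤ) : ℕ :=
  minPosRowsN (((ν a).filter fun p => vac A ν a p.1 - p.2 = x).map Prod.fst)

lemma eStarRemove_apply_ne (A : I → I → ℤ) (a : I) (ν : RCraw I) (x : ℤ) {c : I} (h : c ≠ a) :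
    eStarRemove A a ν x c = ν c := by
  simp only [eStarRemove, if_neg h]

lemma eStarRemove_apply_self (A : I → I → ℤ) (a : I) (ν : RCraw I) (x : ℤ) :
    eStarRemove A a ν x a = (ν a).erase (seL A ν a x, vac A ν a (seL A ν a x) - x)
      + (if seL A ν a x = 1 then 0
         else {(seL A ν a x - 1, vac A ν a (seL A ν a x - 1) - (x - A a a / 2))}) := by
  rw [seL]
  simp only [eStarRemove, if_pos rfl]

end RCAux

namespace RCAux

variable {I : Type*} [DecidableEq I]

lemma fSel_mem {ν : RCraw I} {b : I} (h : fL ν b ≠ 0) : (fL ν b, fx ν b) ∈ ν b := by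
  have h1 : fL ν b ∈ ((ν b).filter fun p => p.2 = fx ν b).map Prod.fst := by
    rw [fL]
    exact maxWith0_mem (by rw [fL] at h; exact h)
  obtain ⟨p, hp, hfst⟩ := Multiset.mem_map.1 h1
  obtain ⟨hmem, hsnd⟩ := Multiset.mem_filter.1 hp
  rcases p with ⟨p1, p2⟩
  dsimp at hfst hsnd
  subst hfst; subst hsnd
  exact hmem

lemma eSel_mem {ν : RCraw I} {b : I} {x : ℤ} (hx : x ∈ (ν b).map Prod.snd) :
    (eL ν b x, x) ∈ ν b := by
  have hf : ((ν b).filter fun p => p.2 = x).map Prod.fst ≠ 0 := by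
    obtain ⟨p, hp, h2⟩ := Multiset.mem_map.1 hx
    have hpf : p ∈ (ν b).filter fun p => p.2 = x := Multiset.mem_filter.2 ⟨hp, h2⟩
    intro h0
    have : p.1 ∈ ((ν b).filter fun p => p.2 = x).map Prod.fst :=
      Multiset.mem_map.2 ⟨p, hpf, rfl⟩
    rw [h0] at this
    simp at this
  have h1 : eL ν b x ∈ ((ν b).filter fun p => p.2 = x).map Prod.fst := by
    rw [eL]; exact minPosRowsN_mem hf
  obtain ⟨p, hp, hfst⟩ := Multiset.mem_map.1 h1
  obtain ⟨hmem, hsnd⟩ := Multiset.mem_filter.1 hp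
  rcases p with ⟨p1, p2⟩
  dsimp at hfst hsnd
  subst hfst; subst hsnd
  exact hmem

open scoped Classical in
lemma seSel_mem {A : I → I → ℤ} {ν : RCraw I} {a : I} {x : ℤ} (hx : x ∈ corigs A ν a) :
    (seL A ν a x, vac A ν a (seL A ν a x) - x) ∈ ν a := by
  have hf : ((ν a).filter fun p => vac A ν a p.1 - p.2 = x).map Prod.fst ≠ 0 := by
    obtain ⟨p, hp, h2⟩ := Multiset.mem_map.1 hx
    have hpf : p ∈ (ν a).filter fun p => vac A ν a p.1 - p.2 = x :=
      Multiset.mem_filter.2 ⟨hp, h2⟩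
    intro h0
    have : p.1 ∈ ((ν a).filter fun p => vac A ν a p.1 - p.2 = x).map Prod.fst :=
      Multiset.mem_map.2 ⟨p, hpf, rfl⟩
    rw [h0] at this
    simp at this
  have h1 : seL A ν a x ∈ ((ν a).filter fun p => vac A ν a p.1 - p.2 = x).map Prod.fst := by
    rw [seL]; exact minPosRowsN_mem hf
  obtain ⟨p, hp, hfst⟩ := Multiset.mem_map.1 h1
  obtain ⟨hmem, hsnd⟩ := Multiset.mem_filter.1 hp
  rcases p with ⟨p1, p2⟩
  dsimp at hfst hsnd
  subst hfst
  have : p2 = vac A ν a (seL A ν a x) - x := by linarith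
  subst this
  exact hmem

open scoped Classical in
lemma sSel_mem {A : I → I → ℤ} {ν : RCraw I} {a : I} (h : sL A ν a ≠ 0) :
    (sL A ν a, vac A ν a (sL A ν a) - sx A ν a) ∈ ν a := by
  have h1 : sL A ν a ∈
      ((ν a).filter fun p => vac A ν a p.1 - p.2 = minWith0 (corigs A ν a)).map Prod.fst := by
    rw [sL]
    exact maxWith0_mem (by rw [sL] at h; exact h)
  obtain ⟨p, hp, hfst⟩ := Multiset.mem_map.1 h1
  obtain ⟨hmem, hsnd⟩ := Multiset.mem_filter.1 hp
  rcases p with ⟨p1, p2⟩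
  dsimp at hfst hsnd
  subst hfst
  have : p2 = vac A ν a (sL A ν a) - sx A ν a := by rw [sx]; linarith
  subst this
  exact hmem

lemma rowSum_fOp (A : I → I → ℤ) (b : I) (ν : RCraw I) (c : I) (i : ℕ) :
    rowSum (fOp A b ν c) i = rowSum (ν c) i + (if c = b ∧ fL ν b < i then 1 else 0) := by
  by_cases h : c = b
  · subst h
    rw [fOp_apply_self, rowSum_add, rowSum_shRow, rowSum_singleton]
    simp only [true_and]
    by_cases hm : (fL ν c, fx ν c) ∈ ν c
    · rw [rowSum_erase hm]
      split_ifs <;> push_cast <;> omega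
    · have hL : fL ν c = 0 := by
        by_contra h0; exact hm (fSel_mem h0)
      rw [Multiset.erase_of_notMem hm, hL]
      split_ifs <;> push_cast <;> omega
  · rw [fOp_apply_ne A b ν h, rowSum_shRow]
    simp [h]

lemma rowSum_eRemove (A : I → I → ℤ) (b : I) (ν : RCraw I) (x : ℤ)
    (hm : (eL ν b x, x) ∈ ν b) (h1 : 1 ≤ eL ν b x) (c : I) (i : ℕ) :
    rowSum (eRemove A b ν x c) i
      = rowSum (ν c) i + -(if c = b ∧ eL ν b x ≤ i then 1 else 0) := by
  by_cases h : c = b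
  · subst h
    rw [eRemove_apply_self, rowSum_add, rowSum_shRow, rowSum_erase hm]
    simp only [true_and]
    by_cases h2 : eL ν c x = 1
    · rw [if_pos h2, rowSum_zero, h2]
      split_ifs <;> push_cast <;> omega
    · rw [if_neg h2, rowSum_singleton]
      split_ifs <;> push_cast <;> omega
  · rw [eRemove_apply_ne A b ν x h, rowSum_shRow]
    simp [h]

lemma vac_fOp (A : I → I → ℤ) {ν : RCraw I} (hfin : FinS ν) (b c : I) (i : ℕ) :
    vac A (fOp A b ν) c i = vac A ν c i + -(if fL ν b < i then A c b else 0) := by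
  have hb : rowSum ((fOp A b ν) b) i = rowSum (ν b) i + (if fL ν b < i then 1 else 0) := by
    rw [rowSum_fOp]; simp
  have hc : ∀ d, d ≠ b → rowSum ((fOp A b ν) d) i = rowSum (ν d) i := by
    intro d hd; rw [rowSum_fOp]; simp [hd]
  have h := vac_shift A hfin (if fL ν b < i then 1 else 0) hb hc c
  rw [h]
  split_ifs <;> ring

lemma vac_eRemove (A : I → I → ℤ) {ν : RCraw I} (hfin : FinS ν) (b : I) (x : ℤ)
    (hm : (eL ν b x, x) ∈ ν b) (h1 : 1 ≤ eL ν b x) (c : I) (i : ℕ) :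
    vac A (eRemove A b ν x) c i = vac A ν c i + (if eL ν b x ≤ i then A c b else 0) := by
  have hb : rowSum ((eRemove A b ν x) b) i
      = rowSum (ν b) i + -(if eL ν b x ≤ i then 1 else 0) := by
    rw [rowSum_eRemove A b ν x hm h1]; simp
  have hc : ∀ d, d ≠ b → rowSum ((eRemove A b ν x) d) i = rowSum (ν d) i := by
    intro d hd; rw [rowSum_eRemove A b ν x hm h1]; simp [hd]
  have h := vac_shift A hfin (-(if eL ν b x ≤ i then 1 else 0)) hb hc c
  rw [h]
  split_ifs <;> ring

lemma corigs_of_shift (A : I → I → ℤ) {ν ν' : RCraw I} {a : I} (g : ℕ → ℤ)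
    (h1 : ν' a = (ν a).map (shRow g))
    (h2 : ∀ i, vac A ν' a i = vac A ν a i + g i) :
    corigs A ν' a = corigs A ν a := by
  rw [corigs, corigs, h1, Multiset.map_map]
  refine Multiset.map_congr rfl fun p _ => ?_
  simp only [Function.comp_apply, shRow]
  rw [h2]
  ring

open scoped Classical in
lemma filter_fst_of_shift (A : I → I → ℤ) {ν ν' : RCraw I} {a : I} (g : ℕ → ℤ)
    (h1 : ν' a = (ν a).map (shRow g))
    (h2 : ∀ i, vac A ν' a i = vac A ν a i + g i) (x : ℤ) :
    ((ν' a).filter fun p => vac A ν' a p.1 - p.2 = x).map Prod.fst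
      = ((ν a).filter fun p => vac A ν a p.1 - p.2 = x).map Prod.fst := by
  have hpred : ∀ p ∈ ν a,
      ((fun q : ℕ × ℤ => vac A ν' a q.1 - q.2 = x) ∘ shRow g) p
        ↔ (vac A ν a p.1 - p.2 = x) := by
    intro p _
    simp only [Function.comp_apply, shRow]
    rw [h2]
    constructor <;> intro h <;> omega
  rw [h1, Multiset.filter_map, Multiset.filter_congr hpred, Multiset.map_map]
  rfl

lemma sx_of_shift (A : I → I → ℤ) {ν ν' : RCraw I} {a : I} (g : ℕ → ℤ)
    (h1 : ν' a = (ν a).map (shRow g))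
    (h2 : ∀ i, vac A ν' a i = vac A ν a i + g i) :
    sx A ν' a = sx A ν a := by
  rw [sx, sx, corigs_of_shift A g h1 h2]

lemma sL_of_shift (A : I → I → ℤ) {ν ν' : RCraw I} {a : I} (g : ℕ → ℤ)
    (h1 : ν' a = (ν a).map (shRow g))
    (h2 : ∀ i, vac A ν' a i = vac A ν a i + g i) :
    sL A ν' a = sL A ν a := by
  rw [sL, sL, corigs_of_shift A g h1 h2, filter_fst_of_shift A g h1 h2]

lemma seL_of_shift (A : I → I → ℤ) {ν ν' : RCraw I} {a : I} (g : ℕ → ℤ)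
    (h1 : ν' a = (ν a).map (shRow g))
    (h2 : ∀ i, vac A ν' a i = vac A ν a i + g i) (x : ℤ) :
    seL A ν' a x = seL A ν a x := by
  rw [seL, seL, filter_fst_of_shift A g h1 h2]

end RCAux

namespace RCAux

variable {I : Type*} [DecidableEq I]

/-- All rows have positive length. -/
def PosR (ν : RCraw I) : Prop := ∀ c, ∀ p ∈ ν c, 0 < p.1

lemma finS_of_apply {ν ν' : RCraw I} (a : I) (h : FinS ν)
    (happ : ∀ c, c ≠ a → ν c = 0 → ν' c = 0) : FinS ν' := by
  refine (h.insert a).subset fun c hc => ?_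
  by_contra h0
  simp only [Set.mem_insert_iff, not_or] at h0
  obtain ⟨h1, h2⟩ := h0
  simp only [Function.mem_support, not_not] at h2
  rw [Function.mem_support] at hc
  exact hc (happ c h1 h2)

lemma finS_fOp (A : I → I → ℤ) (b : I) {ν : RCraw I} (h : FinS ν) : FinS (fOp A b ν) :=
  finS_of_apply b h fun c hc h0 => by rw [fOp_apply_ne A b ν hc, h0]; rfl

lemma finS_eRemove (A : I → I → ℤ) (b : I) (x : ℤ) {ν : RCraw I} (h : FinS ν) :
    FinS (eRemove A b ν x) :=
  finS_of_apply b h fun c hc h0 => by rw [eRemove_apply_ne A b ν x hc, h0]; rfl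

lemma finS_fStar (A : I → I → ℤ) (a : I) {ν : RCraw I} (h : FinS ν) : FinS (fStar A a ν) :=
  finS_of_apply a h fun c hc h0 => by rw [fStar_apply_ne A a ν hc, h0]

lemma finS_eStarRemove (A : I → I → ℤ) (a : I) (x : ℤ) {ν : RCraw I} (h : FinS ν) :
    FinS (eStarRemove A a ν x) :=
  finS_of_apply a h fun c hc h0 => by rw [eStarRemove_apply_ne A a ν x hc, h0]

lemma posR_fOp (A : I → I → ℤ) (b : I) {ν : RCraw I} (h : PosR ν) : PosR (fOp A b ν) := by
  intro c p hp
  by_cases hc : c = b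
  · subst hc
    rw [fOp_apply_self] at hp
    rcases Multiset.mem_add.1 hp with hp | hp
    · obtain ⟨q, hq, rfl⟩ := Multiset.mem_map.1 hp
      simpa [shRow] using h c q (Multiset.mem_of_mem_erase hq)
    · rw [Multiset.mem_singleton] at hp
      subst hp; simp
  · rw [fOp_apply_ne A b ν hc] at hp
    obtain ⟨q, hq, rfl⟩ := Multiset.mem_map.1 hp
    simpa [shRow] using h c q hq

lemma posR_fStar (A : I → I → ℤ) (a : I) {ν : RCraw I} (h : PosR ν) : PosR (fStar A a ν) := by
  intro c p hp
  by_cases hc : c = a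
  · subst hc
    rw [fStar_apply_self] at hp
    rcases Multiset.mem_add.1 hp with hp | hp
    · exact h c p (Multiset.mem_of_mem_erase hp)
    · rw [Multiset.mem_singleton] at hp
      subst hp; simp
  · rw [fStar_apply_ne A a ν hc] at hp
    exact h c p hp

lemma posR_eRemove (A : I → I → ℤ) (b : I) (x : ℤ) {ν : RCraw I} (h : PosR ν)
    (h1 : 1 ≤ eL ν b x) : PosR (eRemove A b ν x) := by
  intro c p hp
  by_cases hc : c = b
  · subst hc
    rw [eRemove_apply_self] at hp
    rcases Multiset.mem_add.1 hp with hp | hp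
    · obtain ⟨q, hq, rfl⟩ := Multiset.mem_map.1 hp
      simpa [shRow] using h c q (Multiset.mem_of_mem_erase hq)
    · by_cases he : eL ν c x = 1
      · rw [if_pos he] at hp; simp at hp
      · rw [if_neg he, Multiset.mem_singleton] at hp
        subst hp
        simp only
        omega
  · rw [eRemove_apply_ne A b ν x hc] at hp
    obtain ⟨q, hq, rfl⟩ := Multiset.mem_map.1 hp
    simpa [shRow] using h c q hq

lemma posR_eStarRemove (A : I → I → ℤ) (a : I) (x : ℤ) {ν : RCraw I} (h : PosR ν)
    (h1 : 1 ≤ seL A ν a x) : PosR (eStarRemove A a ν x) := by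
  intro c p hp
  by_cases hc : c = a
  · subst hc
    rw [eStarRemove_apply_self] at hp
    rcases Multiset.mem_add.1 hp with hp | hp
    · exact h c p (Multiset.mem_of_mem_erase hp)
    · by_cases he : seL A ν c x = 1
      · rw [if_pos he] at hp; simp at hp
      · rw [if_neg he, Multiset.mem_singleton] at hp
        subst hp
        simp only
        omega
  · rw [eStarRemove_apply_ne A a ν x hc] at hp
    exact h c p hp

lemma eOp_some {A : I → I → ℤ} {b : I} {ν ν' : RCraw I} (h : eOp A b ν = some ν') :
    ∃ x, ν' = eRemove A b ν x ∧ x ∈ (ν b).map Prod.snd := by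
  simp only [eOp] at h
  by_cases h1 : A b b = 2
  · rw [if_pos h1] at h
    by_cases h2 : minWith0 ((ν b).map Prod.snd) = 0
    · rw [if_pos h2] at h; exact absurd h (by simp)
    · rw [if_neg h2] at h
      exact ⟨_, (Option.some_injective _ h).symm, minWith0_mem h2⟩
  · rw [if_neg h1] at h
    by_cases h3 : ν b = 0 ∨ minPosRows ((ν b).map Prod.snd) ≠ -A b b / 2
    · rw [if_pos h3] at h; exact absurd h (by simp)
    · rw [if_neg h3] at h
      push_neg at h3
      obtain ⟨hz, he⟩ := h3
      refine ⟨_, (Option.some_injective _ h).symm, ?_⟩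
      rw [← he]
      exact minPosRows_mem (by simpa using hz)

lemma eStarOp_some {A : I → I → ℤ} {a : I} {ν ν' : RCraw I} (h : eStarOp A a ν = some ν') :
    ∃ x, ν' = eStarRemove A a ν x ∧ x ∈ corigs A ν a := by
  simp only [eStarOp] at h
  by_cases h1 : A a a = 2
  · rw [if_pos h1] at h
    by_cases h2 : minWith0 (corigs A ν a) = 0
    · rw [if_pos h2] at h; exact absurd h (by simp)
    · rw [if_neg h2] at h
      exact ⟨_, (Option.some_injective _ h).symm, minWith0_mem h2⟩
  · rw [if_neg h1] at h
    by_cases h3 : ν a = 0 ∨ minPosRows (corigs A ν a) ≠ -A a a / 2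
    · rw [if_pos h3] at h; exact absurd h (by simp)
    · rw [if_neg h3] at h
      push_neg at h3
      obtain ⟨hz, he⟩ := h3
      refine ⟨_, (Option.some_injective _ h).symm, ?_⟩
      rw [← he]
      refine minPosRows_mem ?_
      rw [corigs]
      simpa using hz

lemma rcinf_finS_posR {A : I → I → ℤ} {ν : RCraw I} (h : RCinf A ν) : FinS ν ∧ PosR ν := by
  induction h with
  | empty =>
    constructor
    · refine Set.Finite.subset (Set.finite_empty) fun c hc => ?_
      simp [emptyRC, Function.mem_support] at hc
    · intro c p hp
      simp [emptyRC] at hp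
  | fstep a ν hν ih => exact ⟨finS_fOp A a ih.1, posR_fOp A a ih.2⟩
  | estep a ν ν' hν heq ih =>
    obtain ⟨x, rfl, hx⟩ := eOp_some heq
    exact ⟨finS_eRemove A a x ih.1,
      posR_eRemove A a x ih.2 (ih.2 a _ (eSel_mem hx))⟩

end RCAux

namespace RCAux

variable {I : Type*} [DecidableEq I]

lemma fStar_fOp_comm (A : I → I → ℤ) {a b : I} (hab : a ≠ b) {ν : RCraw I} (hfin : FinS ν) :
    fStar A a (fOp A b ν) = fOp A b (fStar A a ν) := by
  have hg1 : (fOp A b ν) a = (ν a).map (shRow fun i => -(if fL ν b < i then A a b else 0)) :=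
    fOp_apply_ne A b ν hab
  have hg2 : ∀ i, vac A (fOp A b ν) a i
      = vac A ν a i + -(if fL ν b < i then A a b else 0) :=
    fun i => vac_fOp A hfin b a i
  have hsx : sx A (fOp A b ν) a = sx A ν a := sx_of_shift A _ hg1 hg2
  have hsL : sL A (fOp A b ν) a = sL A ν a := sL_of_shift A _ hg1 hg2
  have hμb : fStar A a ν b = ν b := fStar_apply_ne A a ν (Ne.symm hab)
  have hfx : fx (fStar A a ν) b = fx ν b := by rw [fx, fx, hμb]
  have hfL : fL (fStar A a ν) b = fL ν b := by rw [fL, fL, hμb, hfx]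
  funext c
  by_cases hca : c = a
  · subst hca
    rw [fStar_apply_self, hsL, hsx, hg2, hg2, hg1, fOp_apply_ne A b _ hab, hfL,
      fStar_apply_self, Multiset.map_add, map_shRow_erase, Multiset.map_singleton]
    congr 1
    · congr 1
      simp only [shRow, Prod.mk.injEq]
      exact ⟨by trivial, by ring⟩
    · congr 1
      simp only [shRow, Prod.mk.injEq]
      exact ⟨by trivial, by ring⟩
  · by_cases hcb : c = b
    · subst hcb
      rw [fStar_apply_ne A a _ hca]
      rw [fOp_apply_self A c ν, fOp_apply_self A c (fStar A a ν), hμb, hfx, hfL]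
    · rw [fStar_apply_ne A a _ hca, fOp_apply_ne A b ν hcb,
        fOp_apply_ne A b (fStar A a ν) hcb, fStar_apply_ne A a ν hca, hfL]

lemma eStarOp_fOp_comm (A : I → I → ℤ) {a b : I} (hab : a ≠ b) {ν : RCraw I} (hfin : FinS ν) :
    eStarOp A a (fOp A b ν) = Option.map (fOp A b) (eStarOp A a ν) := by
  have hg1 : (fOp A b ν) a = (ν a).map (shRow fun i => -(if fL ν b < i then A a b else 0)) :=
    fOp_apply_ne A b ν hab
  have hg2 : ∀ i, vac A (fOp A b ν) a i
      = vac A ν a i + -(if fL ν b < i then A a b else 0) :=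
    fun i => vac_fOp A hfin b a i
  have hcor : corigs A (fOp A b ν) a = corigs A ν a := corigs_of_shift A _ hg1 hg2
  have key : ∀ x, eStarRemove A a (fOp A b ν) x = fOp A b (eStarRemove A a ν x) := by
    intro x
    have hseL : seL A (fOp A b ν) a x = seL A ν a x := seL_of_shift A _ hg1 hg2 x
    have hρb : eStarRemove A a ν x b = ν b := eStarRemove_apply_ne A a ν x (Ne.symm hab)
    have hfx : fx (eStarRemove A a ν x) b = fx ν b := by rw [fx, fx, hρb]
    have hfL : fL (eStarRemove A a ν x) b = fL ν b := by rw [fL, fL, hρb, hfx]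
    funext c
    by_cases hca : c = a
    · subst hca
      rw [eStarRemove_apply_self, hseL, hg2, hg2, hg1, fOp_apply_ne A b _ hab, hfL,
        eStarRemove_apply_self, Multiset.map_add, map_shRow_erase]
      congr 1
      · congr 1
        simp only [shRow, Prod.mk.injEq]
        exact ⟨by trivial, by ring⟩
      · by_cases hone : seL A ν c x = 1
        · simp [hone]
        · simp only [if_neg hone, Multiset.map_singleton, shRow, Multiset.singleton_inj,
            Prod.mk.injEq]
          exact ⟨by trivial, by ring⟩
    · by_cases hcb : c = b
      · subst hcb
        rw [eStarRemove_apply_ne A a _ x hca]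
        rw [fOp_apply_self A c ν, fOp_apply_self A c (eStarRemove A a ν x), hρb, hfx, hfL]
      · rw [eStarRemove_apply_ne A a _ x hca, fOp_apply_ne A b ν hcb,
          fOp_apply_ne A b (eStarRemove A a ν x) hcb, eStarRemove_apply_ne A a ν x hca, hfL]
  simp only [eStarOp, hcor, hg1, Multiset.map_eq_zero]
  split_ifs <;> simp [key]

lemma eOp_fStar_comm (A : I → I → ℤ) {a b : I} (hab : a ≠ b) {ν : RCraw I}
    (hfin : FinS ν) (hpos : PosR ν) :
    eOp A b (fStar A a ν) = Option.map (fStar A a) (eOp A b ν) := by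
  have hμb : fStar A a ν b = ν b := fStar_apply_ne A a ν (Ne.symm hab)
  have key : ∀ x, x ∈ (ν b).map Prod.snd →
      eRemove A b (fStar A a ν) x = fStar A a (eRemove A b ν x) := by
    intro x hx
    have hm : (eL ν b x, x) ∈ ν b := eSel_mem hx
    have h1 : 1 ≤ eL ν b x := hpos b _ hm
    have hg1 : (eRemove A b ν x) a
        = (ν a).map (shRow fun i => if eL ν b x ≤ i then A a b else 0) :=
      eRemove_apply_ne A b ν x hab
    have hg2 : ∀ i, vac A (eRemove A b ν x) a i
        = vac A ν a i + (if eL ν b x ≤ i then A a b else 0) :=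
      fun i => vac_eRemove A hfin b x hm h1 a i
    have hsx : sx A (eRemove A b ν x) a = sx A ν a := sx_of_shift A _ hg1 hg2
    have hsL : sL A (eRemove A b ν x) a = sL A ν a := sL_of_shift A _ hg1 hg2
    have heL : eL (fStar A a ν) b x = eL ν b x := by rw [eL, eL, hμb]
    funext c
    by_cases hca : c = a
    · subst hca
      rw [eRemove_apply_ne A b _ x hab, heL, fStar_apply_self A c ν,
        fStar_apply_self A c (eRemove A b ν x), hsL, hsx, hg2, hg2, hg1,
        Multiset.map_add, map_shRow_erase, Multiset.map_singleton]
      congr 1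
      · congr 1
        simp only [shRow, Prod.mk.injEq]
        exact ⟨by trivial, by ring⟩
      · congr 1
        simp only [shRow, Prod.mk.injEq]
        exact ⟨by trivial, by ring⟩
    · by_cases hcb : c = b
      · subst hcb
        rw [fStar_apply_ne A a _ hca]
        rw [eRemove_apply_self A c ν x, eRemove_apply_self A c (fStar A a ν) x, hμb, heL]
      · rw [fStar_apply_ne A a _ hca, eRemove_apply_ne A b ν x hcb,
          eRemove_apply_ne A b (fStar A a ν) x hcb, fStar_apply_ne A a ν hca, heL]
  simp only [eOp, hμb]
  by_cases h1 : A b b = 2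
  · rw [if_pos h1, if_pos h1]
    by_cases h2 : minWith0 ((ν b).map Prod.snd) = 0
    · rw [if_pos h2, if_pos h2]; rfl
    · rw [if_neg h2, if_neg h2, Option.map_some]
      exact congrArg some (key _ (minWith0_mem h2))
  · rw [if_neg h1, if_neg h1]
    by_cases h3 : ν b = 0 ∨ minPosRows ((ν b).map Prod.snd) ≠ -A b b / 2
    · rw [if_pos h3, if_pos h3]; rfl
    · rw [if_neg h3, if_neg h3, Option.map_some]
      push_neg at h3
      obtain ⟨hz, he⟩ := h3
      exact congrArg some (key _ (he ▸ minPosRows_mem (by simpa using hz)))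

lemma iterOpt_pres {α : Type*} {g : α → Option α} {P : α → Prop}
    (hpres : ∀ v w, P v → g v = some w → P w) :
    ∀ k (v w : α), P v → iterOpt g k v = some w → P w := by
  intro k
  induction k with
  | zero =>
    intro v w hv h
    rw [iterOpt] at h
    exact (Option.some_injective _ h) ▸ hv
  | succ n ih =>
    intro v w hv h
    rw [iterOpt] at h
    cases hit : iterOpt g n v with
    | none => rw [hit] at h; simp at h
    | some u =>
      rw [hit] at h
      exact hpres u w (ih v u hv hit) h

lemma iterOpt_comm {α : Type*} {g : α → Option α} {f : α → α} {P : α → Prop}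
    (hstep : ∀ v, P v → g (f v) = Option.map f (g v))
    (hpres : ∀ v w, P v → g v = some w → P w) :
    ∀ k (v : α), P v → iterOpt g k (f v) = Option.map f (iterOpt g k v) := by
  intro k
  induction k with
  | zero => intro v hv; rfl
  | succ n ih =>
    intro v hv
    rw [iterOpt, iterOpt, ih v hv]
    cases hit : iterOpt g n v with
    | none => rfl
    | some u =>
      simp only [Option.map_some, Option.bind_some]
      exact hstep u (iterOpt_pres hpres n v u hv hit)

lemma te_congr {α : Type*} {g : α → Option α} {f : α → α} {v : α}
    (h : ∀ k, iterOpt g k (f v) = Option.map f (iterOpt g k v)) :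
    sSup {k | iterOpt g k (f v) ≠ none} = sSup {k | iterOpt g k v ≠ none} := by
  congr 1
  ext k
  simp [Set.mem_setOf_eq, h k, Option.map_eq_none_iff]

end RCAux
/-- For `a ≠ b` and `(ν,J) ∈ RC(∞)`: `f_a^* f_b = f_b f_a^*`,
`tε_a^*(f_b(ν,J)) = tε_a^*(ν,J)` and `tε_b(f_a^*(ν,J)) = tε_b(ν,J)`. -/
theorem rc_fstar_f_commute {I : Type*} [DecidableEq I] (A : I → I → ℤ)
    (hA : IsBorcherdsCartan A) :
    ∀ a b : I, a ≠ b → ∀ ν : RCraw I, RCinf A ν →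
      fStar A a (fOp A b ν) = fOp A b (fStar A a ν) ∧
      teStarRC A a (fOp A b ν) = teStarRC A a ν ∧
      teRC A b (fStar A a ν) = teRC A b ν := by
  intro a b hab ν hν
  obtain ⟨hfin, hpos⟩ := RCAux.rcinf_finS_posR hν
  refine ⟨RCAux.fStar_fOp_comm A hab hfin, ?_, ?_⟩
  · rw [teStarRC, teStarRC]
    refine RCAux.te_congr fun k => ?_
    exact RCAux.iterOpt_comm (P := RCAux.FinS)
      (fun v hv => RCAux.eStarOp_fOp_comm A hab hv)
      (fun v w hv hw => by
        obtain ⟨x, rfl, _⟩ := RCAux.eStarOp_some hw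
        exact RCAux.finS_eStarRemove A a x hv) k ν hfin
  · rw [teRC, teRC]
    refine RCAux.te_congr fun k => ?_
    exact RCAux.iterOpt_comm (P := fun μ => RCAux.FinS μ ∧ RCAux.PosR μ)
      (fun v hv => RCAux.eOp_fStar_comm A hab hv.1 hv.2)
      (fun v w hv hw => by
        obtain ⟨x, rfl, hx⟩ := RCAux.eOp_some hw
        exact ⟨RCAux.finS_eRemove A b x hv.1,
          RCAux.posR_eRemove A b x hv.2 (hv.2 b _ (RCAux.eSel_mem hx))⟩)
      k ν ⟨hfin, hpos⟩
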